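/- For k ≥ 2, the exponential generating identity exp(Σ_{n≥1} (−1)^{n−1} ζ(nk) uⁿ/n) = 1 + Σ_{n≥1} ζ({k}ⁿ) uⁿ holds as an identity of formal power series in u, where ζ({k}ⁿ) = ζ(k,k,…,k) (n repetitions) and ζ(s₁,…,sₙ) = Σ_{m₁>⋯>mₙ≥1} 1/(m₁^{s₁}⋯mₙ^{sₙ}). -/

import Mathlib

open Finset Filter Topology

noncomputable section

/-- `ζ({k}ⁿ) = ζ(k,…,k)` (`n` repetitions):
`Σ_{m₁>⋯>mₙ≥1} 1/(m₁^k⋯mₙ^k)`, with value `1` for `n = 0`. -/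
noncomputable def zetaRep (k n : ℕ) : ℝ :=
  ∑' v : {v : Fin n → ℕ // StrictAnti v ∧ ∀ i, 0 < v i},
    ∏ i : Fin n, (((v.1 i : ℝ)) ^ k)⁻¹

/-- The Riemann zeta value `ζ(s) = Σ_{m≥1} m^{−s}`. -/
noncomputable def zetaVal (s : ℕ) : ℝ := ∑' m : ℕ+, (((m : ℕ) : ℝ) ^ s)⁻¹

namespace ZetaAux

/-- Index type for `zetaRep`. -/
abbrev Idx (n : ℕ) := {v : Fin n → ℕ // StrictAnti v ∧ ∀ i, 0 < v i}

def term (k n : ℕ) (v : Idx n) : ℝ := ∏ i : Fin n, (((v.1 i : ℝ)) ^ k)⁻¹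

lemma term_nonneg (k n : ℕ) (v : Idx n) : 0 ≤ term k n v :=
  Finset.prod_nonneg fun i _ => by positivity

lemma summable_nat {s : ℕ} (hs : 2 ≤ s) : Summable fun m : ℕ => (((m : ℝ)) ^ s)⁻¹ := by
  have := (Real.summable_one_div_nat_pow (p := s)).2 (by omega)
  simpa [one_div] using this

lemma zetaVal_eq {s : ℕ} (hs : 0 < s) : zetaVal s = ∑' m : ℕ, (((m : ℝ)) ^ s)⁻¹ := by
  have h1 : zetaVal s = ∑' m : ({m : ℕ | 0 < m} : Set ℕ), (((m : ℕ) : ℝ) ^ s)⁻¹ := rfl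
  rw [h1, _root_.tsum_subtype {m : ℕ | 0 < m} (fun n : ℕ => (((n : ℝ)) ^ s)⁻¹)]
  congr 1
  funext m
  rcases Nat.eq_zero_or_pos m with hm | hm
  · subst hm
    simp [Set.indicator, hs.ne']
  · simp [Set.indicator, hm]

lemma C_nonneg (k : ℕ) : 0 ≤ ∑' m : ℕ, (((m : ℝ)) ^ k)⁻¹ :=
  tsum_nonneg fun m => by positivity

lemma sum_term_le (k : ℕ) (hk : 2 ≤ k) (n : ℕ) (u : Finset (Idx n)) :
    ∑ v ∈ u, term k n v ≤ (∑' m : ℕ, (((m : ℝ)) ^ k)⁻¹) ^ n := by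
  classical
  set C := ∑' m : ℕ, (((m : ℝ)) ^ k)⁻¹ with hC
  set M := (u.sup fun v => Finset.univ.sup v.1) + 1 with hM
  have h1 : ∑ v ∈ u, term k n v
      = ∑ w ∈ u.image Subtype.val, ∏ i : Fin n, (((w i : ℝ)) ^ k)⁻¹ := by
    rw [Finset.sum_image (fun x _ y _ h => Subtype.ext h)]
    rfl
  have hsub : u.image Subtype.val ⊆ Fintype.piFinset fun _ : Fin n => Finset.range M := by
    intro w hw
    rw [Finset.mem_image] at hw
    obtain ⟨v, hv, rfl⟩ := hw
    rw [Fintype.mem_piFinset]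
    intro i
    rw [Finset.mem_range, hM]
    have h2 : v.1 i ≤ Finset.univ.sup v.1 := Finset.le_sup (Finset.mem_univ i)
    have h3 : Finset.univ.sup v.1 ≤ u.sup fun v => Finset.univ.sup v.1 :=
      Finset.le_sup (f := fun v : Idx n => Finset.univ.sup v.1) hv
    omega
  have h4 : ∑ w ∈ u.image Subtype.val, ∏ i : Fin n, (((w i : ℝ)) ^ k)⁻¹
      ≤ ∑ w ∈ Fintype.piFinset fun _ : Fin n => Finset.range M,
          ∏ i : Fin n, (((w i : ℝ)) ^ k)⁻¹ :=
    Finset.sum_le_sum_of_subset_of_nonneg hsub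
      (fun w _ _ => Finset.prod_nonneg fun i _ => by positivity)
  have h5 : ∑ w ∈ Fintype.piFinset fun _ : Fin n => Finset.range M,
      ∏ i : Fin n, (((w i : ℝ)) ^ k)⁻¹
      = ∏ _i : Fin n, ∑ m ∈ Finset.range M, (((m : ℝ)) ^ k)⁻¹ :=
    (Finset.prod_univ_sum (fun _ : Fin n => Finset.range M) (fun _ m => (((m : ℝ)) ^ k)⁻¹)).symm
  have h6 : ∑ m ∈ Finset.range M, (((m : ℝ)) ^ k)⁻¹ ≤ C :=
    Summable.sum_le_tsum _ (fun m _ => by positivity) (summable_nat hk)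
  calc ∑ v ∈ u, term k n v
      ≤ ∏ _i : Fin n, ∑ m ∈ Finset.range M, (((m : ℝ)) ^ k)⁻¹ := by
        rw [h1, ← h5]; exact h4
    _ ≤ ∏ _i : Fin n, C := Finset.prod_le_prod
        (fun i _ => Finset.sum_nonneg fun m _ => by positivity) (fun i _ => h6)
    _ = C ^ n := by simp

lemma summable_term (k : ℕ) (hk : 2 ≤ k) (n : ℕ) : Summable (term k n) :=
  summable_of_sum_le (fun v => term_nonneg k n v) (sum_term_le k hk n)

/-- The finsets of indices with entries `≤ M`. -/
noncomputable def T (n M : ℕ) : Finset (Idx n) :=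
  @Finset.subtype _ _ (Classical.decPred _)
    (Fintype.piFinset fun _ : Fin n => Finset.range (M + 1))

lemma mem_T {n M : ℕ} {v : Idx n} : v ∈ T n M ↔ ∀ i, v.1 i ≤ M := by
  classical
  rw [T, @Finset.mem_subtype _ _ (Classical.decPred _), Fintype.mem_piFinset]
  simp only [Finset.mem_range]
  exact forall_congr' fun i => by omega

lemma tendsto_T (n : ℕ) : Tendsto (T n) atTop atTop := by
  apply Filter.tendsto_atTop_finset_of_monotone
  · intro a b hab
    intro v hv
    rw [mem_T] at hv ⊢
    exact fun i => (hv i).trans hab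
  · intro v
    exact ⟨Finset.univ.sup v.1, by rw [mem_T]; exact fun i => Finset.le_sup (Finset.mem_univ i)⟩

/-- Finite approximation of `zetaRep`. -/
noncomputable def E (k n M : ℕ) : ℝ := ∑ v ∈ T n M, term k n v

/-- Finite approximation of `zetaVal`. -/
noncomputable def P (s M : ℕ) : ℝ := ∑ m ∈ Finset.range (M + 1), (((m : ℝ)) ^ s)⁻¹

lemma tendsto_E (k : ℕ) (hk : 2 ≤ k) (n : ℕ) :
    Tendsto (fun M => E k n M) atTop (𝓝 (zetaRep k n)) := by
  have h := (summable_term k hk n).hasSum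
  exact h.comp (tendsto_T n)

lemma tendsto_P (s : ℕ) (hs : 2 ≤ s) :
    Tendsto (fun M => P s M) atTop (𝓝 (zetaVal s)) := by
  have h := ((summable_nat hs).hasSum).tendsto_sum_nat
  rw [← zetaVal_eq (by omega)] at h
  exact h.comp (tendsto_add_atTop_nat 1)
/-- Two strictly antitone tuples with the same image are equal. -/
lemma strictAnti_eq_of_image_eq {n : ℕ} {v w : Fin n → ℕ} (hv : StrictAnti v)
    (hw : StrictAnti w) (h : Finset.univ.image v = Finset.univ.image w) : v = w := by
  have hcard : (Finset.univ.image v).card = n := by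
    rw [Finset.card_image_of_injective _ hv.injective, Finset.card_univ, Fintype.card_fin]
  have hvrev : StrictMono (v ∘ Fin.rev) := fun i j hij =>
    hv (Fin.rev_lt_rev.mpr hij)
  have hwrev : StrictMono (w ∘ Fin.rev) := fun i j hij =>
    hw (Fin.rev_lt_rev.mpr hij)
  have h1 : v ∘ Fin.rev = ⇑((Finset.univ.image v).orderEmbOfFin hcard) :=
    Finset.orderEmbOfFin_unique hcard
      (fun x => by rw [Finset.mem_image]; exact ⟨x.rev, Finset.mem_univ _, rfl⟩) hvrev
  have h2 : w ∘ Fin.rev = ⇑((Finset.univ.image v).orderEmbOfFin hcard) :=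
    Finset.orderEmbOfFin_unique hcard
      (fun x => by rw [h, Finset.mem_image]; exact ⟨x.rev, Finset.mem_univ _, rfl⟩) hwrev
  funext i
  have := congrFun (h1.trans h2.symm) i.rev
  simpa [Fin.rev_rev] using this

def xv (k M : ℕ) : Fin M → ℝ := fun j => ((((j : ℕ) + 1 : ℕ) : ℝ) ^ k)⁻¹

lemma E_eq (k n M : ℕ) :
    E k n M = ∑ t ∈ Finset.powersetCard n (Finset.univ : Finset (Fin M)),
      ∏ j ∈ t, xv k M j := by
  classical
  refine Finset.sum_bij (fun (v : Idx n) (hv : v ∈ T n M) =>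
    Finset.univ.image (fun i : Fin n => (⟨v.1 i - 1, by
      have h1 := (mem_T.mp hv) i; have h2 := v.2.2 i; omega⟩ : Fin M))) ?_ ?_ ?_ ?_
  · -- membership
    intro v hv
    rw [Finset.mem_powersetCard_univ]
    rw [Finset.card_image_of_injective _ ?_, Finset.card_univ, Fintype.card_fin]
    intro a b hab
    have hab' : v.1 a - 1 = v.1 b - 1 := congrArg Fin.val hab
    have ha := v.2.2 a; have hb := v.2.2 b
    exact v.2.1.injective (by omega)
  · -- injectivity
    intro v hv w hw h
    have h' : Finset.univ.image (fun i : Fin n => v.1 i - 1)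
        = Finset.univ.image (fun i : Fin n => w.1 i - 1) := by
      have := congrArg (Finset.image Fin.val) h
      rwa [Finset.image_image, Finset.image_image] at this
    have hv' : StrictAnti (fun i : Fin n => v.1 i - 1) := by
      intro a b hab
      have h1 := v.2.1 hab; have h2 := v.2.2 b; have h3 := v.2.2 a
      simp only []
      omega
    have hw' : StrictAnti (fun i : Fin n => w.1 i - 1) := by
      intro a b hab
      have h1 := w.2.1 hab; have h2 := w.2.2 b; have h3 := w.2.2 a
      simp only []
      omega
    have heq := strictAnti_eq_of_image_eq hv' hw' h'
    apply Subtype.ext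
    funext i
    have := congrFun heq i
    have h2 := v.2.2 i; have h3 := w.2.2 i
    omega
  · -- surjectivity
    intro b hb
    rw [Finset.mem_powersetCard_univ] at hb
    set e := b.orderEmbOfFin hb with he
    have hanti : StrictAnti (fun i : Fin n => ((e i.rev : Fin M) : ℕ) + 1) := by
      intro i j hij
      have h1 : j.rev < i.rev := Fin.rev_lt_rev.mpr hij
      have h2 : e j.rev < e i.rev := e.strictMono h1
      show ((e j.rev : Fin M) : ℕ) + 1 < ((e i.rev : Fin M) : ℕ) + 1
      have : ((e j.rev : Fin M) : ℕ) < ((e i.rev : Fin M) : ℕ) := h2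
      omega
    refine ⟨⟨fun i => ((e i.rev : Fin M) : ℕ) + 1, hanti, fun i => Nat.succ_pos _⟩, ?_, ?_⟩
    · rw [mem_T]
      intro i
      show ((e i.rev : Fin M) : ℕ) + 1 ≤ M
      have := (e i.rev).isLt
      omega
    · ext x
      simp only [Finset.mem_image, Finset.mem_univ, true_and]
      constructor
      · rintro ⟨i, rfl⟩
        have : (⟨((e i.rev : Fin M) : ℕ) + 1 - 1, by omega⟩ : Fin M) = e i.rev := by
          apply Fin.ext; simp
        rw [this]
        exact b.orderEmbOfFin_mem hb i.rev
      · intro hx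
        have : x ∈ Set.range ⇑e := by rw [he, Finset.range_orderEmbOfFin]; exact hx
        obtain ⟨i, hi⟩ := this
        refine ⟨i.rev, ?_⟩
        apply Fin.ext
        simp [Fin.rev_rev, hi]
  · -- values
    intro v hv
    rw [Finset.prod_image ?inj]
    case inj =>
      intro a _ b _ hab
      have hab' : v.1 a - 1 = v.1 b - 1 := congrArg Fin.val hab
      have ha := v.2.2 a; have hb := v.2.2 b
      exact v.2.1.injective (by omega)
    unfold term xv
    apply Finset.prod_congr rfl
    intro i _
    have h2 := v.2.2 i
    show (((v.1 i : ℝ)) ^ k)⁻¹ = ((((v.1 i - 1) + 1 : ℕ) : ℝ) ^ k)⁻¹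
    rw [Nat.sub_add_cancel h2]


lemma aeval_esymm (k M n : ℕ) :
    MvPolynomial.aeval (xv k M) (MvPolynomial.esymm (Fin M) ℝ n) = E k n M := by
  rw [E_eq, MvPolynomial.esymm, map_sum]
  apply Finset.sum_congr rfl
  intro t _
  rw [map_prod]
  simp

lemma aeval_psum (k M i : ℕ) (hik : i * k ≠ 0) :
    MvPolynomial.aeval (xv k M) (MvPolynomial.psum (Fin M) ℝ i) = P (i * k) M := by
  rw [MvPolynomial.psum, map_sum]
  simp only [map_pow, MvPolynomial.aeval_X]
  rw [P, Finset.sum_range_succ']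
  have h0 : ((((0 : ℕ) : ℝ)) ^ (i * k))⁻¹ = 0 := by
    rw [Nat.cast_zero, zero_pow hik, inv_zero]
  rw [h0, add_zero, Finset.sum_range fun m => ((((m + 1 : ℕ) : ℝ)) ^ (i * k))⁻¹]
  apply Finset.sum_congr rfl
  intro j _
  rw [xv, inv_pow, ← pow_mul, mul_comm k i]

lemma newton_fin (k : ℕ) (hk0 : k ≠ 0) (M n : ℕ) :
    (n : ℝ) * E k n M = (-1) ^ (n + 1) *
      ∑ a ∈ (Finset.HasAntidiagonal.antidiagonal n).filter (fun a => a.1 < n),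
        (-1) ^ a.1 * E k a.1 M * P (a.2 * k) M := by
  have h := congrArg (MvPolynomial.aeval (xv k M)) (MvPolynomial.mul_esymm_eq_sum (Fin M) ℝ n)
  simp only [map_mul, map_sum, map_pow, map_neg, map_one, map_natCast] at h
  rw [aeval_esymm] at h
  rw [h]
  congr 1
  apply Finset.sum_congr rfl
  intro a ha
  rw [Finset.mem_filter, Finset.HasAntidiagonal.mem_antidiagonal] at ha
  have ha2 : a.2 * k ≠ 0 := by
    have : 0 < a.2 := by omega
    positivity
  rw [aeval_esymm, aeval_psum _ _ _ ha2]

lemma zetaRep_zero (k : ℕ) : zetaRep k 0 = 1 := by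
  have hu : Unique (Idx 0) :=
    ⟨⟨⟨fun i => i.elim0, fun a => a.elim0, fun i => i.elim0⟩⟩,
      by rintro ⟨v, h⟩; apply Subtype.ext; funext i; exact i.elim0⟩
  rw [zetaRep, tsum_eq_single (hu.default)]
  · simp
  · intro v hv
    exact absurd (hu.uniq v) hv

lemma newton (k : ℕ) (hk : 2 ≤ k) (n : ℕ) :
    (n : ℝ) * zetaRep k n = (-1) ^ (n + 1) *
      ∑ a ∈ (Finset.HasAntidiagonal.antidiagonal n).filter (fun a => a.1 < n),
        (-1) ^ a.1 * zetaRep k a.1 * zetaVal (a.2 * k) := by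
  have hL : Tendsto (fun M => (n : ℝ) * E k n M) atTop (𝓝 ((n : ℝ) * zetaRep k n)) :=
    (tendsto_E k hk n).const_mul _
  have hR : Tendsto (fun M => (-1 : ℝ) ^ (n + 1) *
      ∑ a ∈ (Finset.HasAntidiagonal.antidiagonal n).filter (fun a => a.1 < n),
        (-1) ^ a.1 * E k a.1 M * P (a.2 * k) M) atTop
      (𝓝 ((-1) ^ (n + 1) *
        ∑ a ∈ (Finset.HasAntidiagonal.antidiagonal n).filter (fun a => a.1 < n),
          (-1) ^ a.1 * zetaRep k a.1 * zetaVal (a.2 * k))) := by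
    apply Tendsto.const_mul
    apply tendsto_finset_sum
    intro a ha
    rw [Finset.mem_filter, Finset.HasAntidiagonal.mem_antidiagonal] at ha
    have ha2 : 1 ≤ a.2 := by omega
    have hs : 2 ≤ a.2 * k := le_trans hk (Nat.le_mul_of_pos_left k ha2)
    exact ((tendsto_E k hk a.1).const_mul _).mul (tendsto_P _ hs)
  have heq : (fun M => (n : ℝ) * E k n M) = fun M => (-1 : ℝ) ^ (n + 1) *
      ∑ a ∈ (Finset.HasAntidiagonal.antidiagonal n).filter (fun a => a.1 < n),
        (-1) ^ a.1 * E k a.1 M * P (a.2 * k) M := by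
    funext M
    exact newton_fin k (by omega) M n
  rw [heq] at hL
  exact tendsto_nhds_unique hL hR

end ZetaAux

/-- The formal power series `Σ_{n≥1} (−1)^{n−1} ζ(nk) uⁿ/n`. -/
noncomputable def Ak (k : ℕ) : PowerSeries ℝ :=
  PowerSeries.mk fun n => if n = 0 then 0 else (-1 : ℝ) ^ (n - 1) * zetaVal (n * k) / n

/-- The formal exponential `exp(F) = Σ_m F^m/m!` of a power series `F` with zero
constant term (coefficientwise, only finitely many terms contribute in each
degree). -/
noncomputable def formalExp (F : PowerSeries ℝ) : PowerSeries ℝ :=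
  PowerSeries.mk fun N =>
    ∑ m ∈ Finset.range (N + 1), PowerSeries.coeff N (F ^ m) / (Nat.factorial m)

namespace ZetaAux
open PowerSeries

lemma coeff_pow_eq_zero {F : PowerSeries ℝ} (hF : constantCoeff F = 0)
    {N m : ℕ} (h : N < m) : coeff N (F ^ m) = 0 := by
  have h1 : (X : PowerSeries ℝ) ^ m ∣ F ^ m := pow_dvd_pow_of_dvd (X_dvd_iff.mpr hF) m
  exact X_pow_dvd_iff.mp h1 N h

noncomputable def G (F : PowerSeries ℝ) (W : ℕ) : PowerSeries ℝ :=
  ∑ m ∈ Finset.range (W + 1), (m.factorial : ℝ)⁻¹ • F ^ m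

lemma coeff_formalExp {F : PowerSeries ℝ} (hF : constantCoeff F = 0) {N W : ℕ}
    (hW : N ≤ W) : coeff N (formalExp F) = coeff N (G F W) := by
  rw [formalExp, coeff_mk, G, map_sum]
  simp only [map_smul, smul_eq_mul, div_eq_inv_mul]
  exact Finset.sum_subset (Finset.range_subset_range.mpr (by omega))
    (fun m _ hm => by
      rw [Finset.mem_range, not_lt] at hm
      rw [coeff_pow_eq_zero hF (by omega), mul_zero])

lemma deriv_G (F : PowerSeries ℝ) (N : ℕ) :
    d⁄dX ℝ (G F (N + 1)) = d⁄dX ℝ F * G F N := by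
  rw [G, map_sum]
  simp only [Derivation.map_smul]
  rw [Finset.sum_range_succ']
  have h0 : ((Nat.factorial 0 : ℝ))⁻¹ • d⁄dX ℝ (F ^ 0) = 0 := by simp
  rw [h0, add_zero, G, Finset.mul_sum]
  apply Finset.sum_congr rfl
  intro m _
  rw [Derivation.leibniz_pow, Nat.add_sub_cancel]
  rw [← Nat.cast_smul_eq_nsmul ℝ, smul_smul]
  have hfac : (((m + 1).factorial : ℝ))⁻¹ * ((m + 1 : ℕ) : ℝ) = ((m.factorial : ℝ))⁻¹ := by
    rw [Nat.factorial_succ, Nat.cast_mul]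
    have h1 : ((m + 1 : ℕ) : ℝ) ≠ 0 := Nat.cast_ne_zero.mpr (Nat.succ_ne_zero m)
    have h2 : ((m.factorial : ℝ)) ≠ 0 := Nat.cast_ne_zero.mpr m.factorial_ne_zero
    field_simp
  rw [hfac, smul_eq_mul, mul_smul_comm, mul_comm]

lemma deriv_formalExp {F : PowerSeries ℝ} (hF : constantCoeff F = 0) :
    d⁄dX ℝ (formalExp F) = d⁄dX ℝ F * formalExp F := by
  ext N
  rw [coeff_derivative, coeff_formalExp hF (le_refl (N + 1)), ← coeff_derivative, deriv_G,
    coeff_mul, coeff_mul]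
  apply Finset.sum_congr rfl
  intro p hp
  rw [Finset.HasAntidiagonal.mem_antidiagonal] at hp
  rw [← coeff_formalExp hF (show p.2 ≤ N by omega)]

lemma reindex (n : ℕ) (e p : ℕ → ℝ) :
    (-1 : ℝ) ^ ((n + 1) + 1) *
      ∑ a ∈ (Finset.HasAntidiagonal.antidiagonal (n + 1)).filter (fun a => a.1 < n + 1),
        (-1) ^ a.1 * e a.1 * p a.2
    = ∑ a ∈ Finset.HasAntidiagonal.antidiagonal n, (-1) ^ a.1 * p (a.1 + 1) * e a.2 := by
  rw [Finset.mul_sum]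
  refine Finset.sum_nbij' (i := fun a => (a.2 - 1, a.1)) (j := fun b => (b.2, b.1 + 1))
    ?_ ?_ ?_ ?_ ?_
  · intro a ha
    rw [Finset.mem_filter, Finset.HasAntidiagonal.mem_antidiagonal] at ha
    simp only [Finset.HasAntidiagonal.mem_antidiagonal]
    omega
  · intro b hb
    rw [Finset.HasAntidiagonal.mem_antidiagonal] at hb
    simp only [Finset.mem_filter, Finset.HasAntidiagonal.mem_antidiagonal]
    omega
  · intro a ha
    rw [Finset.mem_filter, Finset.HasAntidiagonal.mem_antidiagonal] at ha
    ext <;> simp <;> omega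
  · intro b hb
    rw [Finset.HasAntidiagonal.mem_antidiagonal] at hb
    ext <;> simp <;> omega
  · intro a ha
    rw [Finset.mem_filter, Finset.HasAntidiagonal.mem_antidiagonal] at ha
    show (-1 : ℝ) ^ (n + 1 + 1) * ((-1) ^ a.1 * e a.1 * p a.2)
      = (-1) ^ (a.2 - 1) * p (a.2 - 1 + 1) * e a.1
    have h2 : a.2 - 1 + 1 = a.2 := by omega
    have hsign : (-1 : ℝ) ^ (n + 1 + 1) * (-1) ^ a.1 = (-1) ^ (a.2 - 1) := by
      rw [← pow_add]
      have h3 : n + 1 + 1 + a.1 = (a.2 - 1) + 2 * (a.1 + 1) := by omega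
      rw [h3, pow_add, pow_mul]
      norm_num
    rw [h2, ← hsign]
    ring

end ZetaAux

lemma Ak_constantCoeff (k : ℕ) : PowerSeries.constantCoeff (Ak k) = 0 := by
  rw [Ak, ← PowerSeries.coeff_zero_eq_constantCoeff_apply, PowerSeries.coeff_mk]
  simp

namespace ZetaAux
open PowerSeries in
lemma key (k : ℕ) (hk : 2 ≤ k) : ∀ N, coeff N (formalExp (Ak k)) = zetaRep k N := by
  intro N
  induction N using Nat.strong_induction_on with
  | _ N IH =>
    match N with
    | 0 =>
      rw [formalExp, coeff_mk, zetaRep_zero]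
      simp
    | Nat.succ N =>
      have hD := congrArg (coeff N) (deriv_formalExp (Ak_constantCoeff k))
      rw [coeff_derivative, coeff_mul] at hD
      have hterm : ∀ p ∈ Finset.HasAntidiagonal.antidiagonal N,
          coeff p.1 (d⁄dX ℝ (Ak k)) * coeff p.2 (formalExp (Ak k))
          = (-1 : ℝ) ^ p.1 * zetaVal ((p.1 + 1) * k) * zetaRep k p.2 := by
        intro p hp
        rw [Finset.HasAntidiagonal.mem_antidiagonal] at hp
        rw [coeff_derivative, IH p.2 (by omega)]
        congr 1
        rw [Ak, coeff_mk]
        simp only [Nat.succ_ne_zero, if_false, Nat.succ_sub_one]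
        have hne : ((p.1 : ℝ) + 1) ≠ 0 := by positivity
        push_cast
        field_simp
      rw [Finset.sum_congr rfl hterm] at hD
      have hN := newton k hk (N + 1)
      have hre := reindex N (zetaRep k) (fun j => zetaVal (j * k))
      rw [hre] at hN
      push_cast at hN
      have hfin : coeff (N + 1) (formalExp (Ak k)) * ((N : ℝ) + 1)
          = zetaRep k (N + 1) * ((N : ℝ) + 1) := by
        rw [hD, ← hN]
        ring
      have hne : ((N : ℝ) + 1) ≠ 0 := by positivity
      exact mul_right_cancel₀ hne hfin

end ZetaAux

/-- For `k ≥ 2`, `exp(Σ_{n≥1} (−1)^{n−1} ζ(nk) uⁿ/n) = 1 + Σ_{n≥1} ζ({k}ⁿ) uⁿ`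
as formal power series in `u`. -/
theorem exp_zeta_generating_identity (k : ℕ) (hk : 2 ≤ k) :
    formalExp (Ak k) = PowerSeries.mk fun n => if n = 0 then (1 : ℝ) else zetaRep k n := by
  ext N
  rw [PowerSeries.coeff_mk, ZetaAux.key k hk N]
  rcases Nat.eq_zero_or_pos N with h | h
  · subst h
    rw [ZetaAux.zetaRep_zero]
    simp
  · rw [if_neg (by omega)]
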